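/- For any graph G with m edges, the average degeneracy satisfies Σ_{(u,v)∈E} min(d(u),d(v)) ≤ 2m·α*(G), where α*(G) is the pseudo-arboricity; equivalently, if G admits an orientation in which every vertex has out-degree at most p, then Σ_{(u,v)∈E} min(d(u),d(v)) ≤ 2mp. -/

import Mathlib

theorem sum_min_degree_le_two_m_p {V : Type*} [Fintype V] [DecidableEq V]
    (G : SimpleGraph V) [DecidableRel G.Adj] (p : ℕ)
    (r : V → V → Prop) [DecidableRel r]
    (hsub : ∀ u v : V, r u v → G.Adj u v)
    (hcover : ∀ u v : V, G.Adj u v → (r u v ↔ ¬ r v u))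
    (hout : ∀ u : V, (Finset.univ.filter (fun v => r u v)).card ≤ p) :
    ∑ e ∈ G.edgeFinset,
        Sym2.lift ⟨fun u v => min (G.degree u) (G.degree v),
          fun u v => min_comm _ _⟩ e ≤
      2 * G.edgeFinset.card * p := by
  classical
  set T : Finset (V × V) :=
    (Finset.univ ×ˢ Finset.univ).filter (fun q : V × V => r q.1 q.2) with hT
  have h1 : ∑ e ∈ G.edgeFinset,
      Sym2.lift ⟨fun u v => min (G.degree u) (G.degree v),
        fun u v => min_comm _ _⟩ e
      = ∑ q ∈ T, min (G.degree q.1) (G.degree q.2) := by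
    refine Eq.symm (Finset.sum_bij (fun (q : V × V) _ => Sym2.mk q.1 q.2) ?_ ?_ ?_ ?_)
    · intro q hq
      obtain ⟨a, b⟩ := q
      simp only [hT, Finset.mem_filter] at hq
      simpa [SimpleGraph.mem_edgeFinset] using hsub _ _ hq.2
    · intro a ha b hb hab
      simp only [hT, Finset.mem_filter] at ha hb
      rcases Sym2.mk_eq_mk_iff.mp hab with h | h
      · exact Prod.ext (congrArg Prod.fst h) (congrArg Prod.snd h)
      · exfalso
        have h1 : a.1 = b.2 := congrArg Prod.fst h
        have h2 : a.2 = b.1 := congrArg Prod.snd h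
        have hadj := hsub _ _ ha.2
        have := (hcover _ _ hadj).mp ha.2
        rw [h1, h2] at this
        exact this hb.2
    · intro e he
      induction e with
      | _ u v =>
        have hadj : G.Adj u v := by simpa [SimpleGraph.mem_edgeFinset] using he
        by_cases h : r u v
        · exact ⟨(u, v), by simp [hT, h], rfl⟩
        · have : r v u := by
            by_contra h'
            exact h ((hcover u v hadj).mpr h')
          exact ⟨(v, u), by simp [hT, this], Sym2.eq_swap⟩
    · intro q hq
      obtain ⟨a, b⟩ := q
      simp
  rw [h1]
  have h2 : ∑ q ∈ T, min (G.degree q.1) (G.degree q.2) ≤ ∑ q ∈ T, G.degree q.1 :=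
    Finset.sum_le_sum fun q _ => min_le_left _ _
  have h3 : ∑ q ∈ T, G.degree q.1
      = ∑ u, (Finset.univ.filter (fun v => r u v)).card * G.degree u := by
    rw [hT, Finset.sum_filter, Finset.sum_product]
    refine Finset.sum_congr rfl fun u _ => ?_
    rw [← Finset.sum_filter]
    dsimp only
    refine (Finset.sum_const_nat (m := G.degree u) fun _ _ => rfl).trans ?_
    congr 1
  have h4 : ∑ u, (Finset.univ.filter (fun v => r u v)).card * G.degree u
      ≤ ∑ u, p * G.degree u :=
    Finset.sum_le_sum fun u _ => Nat.mul_le_mul_right _ (hout u)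
  have h5 : ∑ u, p * G.degree u = 2 * G.edgeFinset.card * p := by
    rw [← Finset.mul_sum, SimpleGraph.sum_degrees_eq_twice_card_edges]
    ring
  omega
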